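/- Let S and T be disjoint finite sets, σ' a permutation of S and σ'' a permutation of T. Then the map (τ', τ'') ↦ τ' ⊎ τ'' is an order isomorphism from the product poset {τ' : τ' ≤ σ'} × {τ'' : τ'' ≤ σ''} (lower order ideals in the restriction orders on permutations of S and of T, with the product order) onto the lower order ideal {τ : τ ≤ σ' ⊎ σ''} in the restriction order on permutations of S ∪ T. In particular, lower order ideals in the restriction poset of bijections are product posets. -/

import Mathlib

/-!
STATEMENT 10: For disjoint finite sets `S`, `T`, a permutation `σ'` of `S` and a
permutation `σ''` of `T`, the map `(τ', τ'') ↦ τ' ⊎ τ''` is an order isomorphism from the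
product of the lower order ideals `{τ' ≤ σ'}` and `{τ'' ≤ σ''}` (in the restriction
orders) onto the lower order ideal `{τ ≤ σ' ⊎ σ''}`.  Here permutations of a finite
subset of `α` are encoded as permutations of `α` fixing the complement pointwise; the
juxtaposition `σ' ⊎ σ''` is then the product `σ' * σ''`.
-/

set_option linter.unusedSectionVars false

variable {α : Type*} [Fintype α] [DecidableEq α]

/-- The restriction order on permutations: `RestrLE τ σ` holds iff every `τ`-orbit is
contained in a `σ`-orbit and, for every `a`, `τ a = σ^k a` where `k ≥ 1` is minimal such
that `σ^k a` lies in the `τ`-orbit of `a` (i.e. `τ` acts on each of its orbits as the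
first-return map of `σ`). -/
def RestrLE (τ σ : Equiv.Perm α) : Prop :=
  (∀ a b : α, τ.SameCycle a b → σ.SameCycle a b) ∧
  ∀ a : α, ∃ k : ℕ, 0 < k ∧ τ a = (σ ^ k) a ∧
    ∀ j : ℕ, 0 < j → j < k → ¬ τ.SameCycle a ((σ ^ j) a)

namespace RestrAux

lemma inv_fix {τ : Equiv.Perm α} {a : α} (h : τ a = a) : τ⁻¹ a = a := by
  conv_lhs => rw [← h]
  exact τ.symm_apply_apply a

lemma sameCycle_fix {τ : Equiv.Perm α} {a b : α} (h : τ a = a) (hsc : τ.SameCycle a b) :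
    b = a := by
  obtain ⟨i, hi⟩ := hsc
  rw [Equiv.Perm.zpow_apply_eq_self_of_apply_eq_self h] at hi
  exact hi.symm

lemma mem_iff_of_fix {τ : Equiv.Perm α} {p : α → Prop} (h : ∀ a, ¬ p a → τ a = a) (a : α) :
    p a ↔ p (τ a) := by
  constructor
  · intro ha
    by_contra hb
    have h2 : τ (τ a) = τ a := h _ hb
    have h3 : τ a = a := τ.injective h2
    exact hb (by rw [h3]; exact ha)
  · intro ha
    by_contra hb
    rw [h a hb] at ha
    exact hb ha

lemma natAgree {f g : Equiv.Perm α} {p : α → Prop} (hp : ∀ a, p a ↔ p (f a))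
    (h1 : ∀ a, p a → f a = g a) :
    ∀ (n : ℕ) (a), p a → (f ^ n) a = (g ^ n) a ∧ p ((f ^ n) a) := by
  intro n
  induction n with
  | zero => intro a ha; simpa using ha
  | succ n ih =>
    intro a ha
    have hfa : p (f a) := (hp a).1 ha
    constructor
    · calc (f ^ (n + 1)) a = (f ^ n) (f a) := by rw [pow_succ, Equiv.Perm.mul_apply]
        _ = (g ^ n) (f a) := (ih (f a) hfa).1
        _ = (g ^ n) (g a) := by rw [h1 a ha]
        _ = (g ^ (n + 1)) a := by rw [pow_succ, Equiv.Perm.mul_apply]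
    · have e : (f ^ (n + 1)) a = (f ^ n) (f a) := by rw [pow_succ, Equiv.Perm.mul_apply]
      rw [e]
      exact (ih (f a) hfa).2

lemma zpowAgree {f g : Equiv.Perm α} {p : α → Prop} (hp : ∀ a, p a ↔ p (f a))
    (h1 : ∀ a, p a → f a = g a) (h2 : ∀ a, p a → f⁻¹ a = g⁻¹ a) :
    ∀ (i : ℤ) (a), p a → (f ^ i) a = (g ^ i) a ∧ p ((f ^ i) a) := by
  have hp' : ∀ a, p a ↔ p (f⁻¹ a) := by
    intro a
    have := (hp (f⁻¹ a)).symm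
    rwa [show f (f⁻¹ a) = a from f.apply_symm_apply a] at this
  intro i a ha
  cases i with
  | ofNat n => simpa [zpow_natCast] using natAgree hp h1 n a ha
  | negSucc n =>
    have key := natAgree hp' h2 (n + 1) a ha
    have e1 : (f ^ (Int.negSucc n)) a = ((f⁻¹) ^ (n + 1)) a := by
      rw [zpow_negSucc, ← inv_pow]
    have e2 : (g ^ (Int.negSucc n)) a = ((g⁻¹) ^ (n + 1)) a := by
      rw [zpow_negSucc, ← inv_pow]
    rw [e1, e2]
    exact key

lemma sameCycle_iff_of_agree {f g : Equiv.Perm α} {p : α → Prop} (hp : ∀ a, p a ↔ p (f a))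
    (h1 : ∀ a, p a → f a = g a) (h2 : ∀ a, p a → f⁻¹ a = g⁻¹ a) {a : α} (ha : p a) (b : α) :
    f.SameCycle a b ↔ g.SameCycle a b :=
  exists_congr fun i => by rw [(zpowAgree hp h1 h2 i a ha).1]

lemma restr_fix {τ ρ : Equiv.Perm α} (h : RestrLE τ ρ) {a : α} (hfix : ρ a = a) :
    τ a = a := by
  obtain ⟨k, _, hka, _⟩ := h.2 a
  rw [hka, Equiv.Perm.pow_apply_eq_self_of_apply_eq_self hfix]

lemma prod_lemmas (S T : Finset α) (hST : Disjoint S T) (f g : Equiv.Perm α)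
    (hf : ∀ a ∉ S, f a = a) (hg : ∀ a ∉ T, g a = a) :
    (∀ a, a ∈ S ↔ (f * g) a ∈ S) ∧ (∀ a, a ∈ S → (f * g) a = f a) ∧
      (∀ a, a ∈ S → (f * g)⁻¹ a = f⁻¹ a) := by
  have hnot : ∀ a ∈ S, a ∉ T := fun a ha => Finset.disjoint_left.mp hST ha
  have hfS : ∀ a, a ∈ S ↔ f a ∈ S := mem_iff_of_fix hf
  have hgT : ∀ a, a ∈ T ↔ g a ∈ T := mem_iff_of_fix hg
  have happ : ∀ a, a ∈ S → (f * g) a = f a := by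
    intro a ha
    rw [Equiv.Perm.mul_apply, hg a (hnot a ha)]
  refine ⟨?_, happ, ?_⟩
  · intro a
    by_cases haT : a ∈ T
    · have haS : a ∉ S := fun h => hnot a h haT
      have hga : g a ∈ T := (hgT a).1 haT
      have hga' : g a ∉ S := fun h => hnot _ h hga
      rw [Equiv.Perm.mul_apply, hf _ hga']
      exact ⟨fun h => absurd h haS, fun h => absurd h hga'⟩
    · rw [Equiv.Perm.mul_apply, hg a haT]
      exact hfS a
  · intro a ha
    have hfa : f⁻¹ a ∈ S := by
      have := hfS (f⁻¹ a)
      rw [show f (f⁻¹ a) = a from f.apply_symm_apply a] at this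
      exact this.2 ha
    rw [mul_inv_rev, Equiv.Perm.mul_apply]
    rw [inv_fix (hg _ (hnot _ hfa))]

lemma commute_of_fix (S T : Finset α) (hST : Disjoint S T) (f g : Equiv.Perm α)
    (hf : ∀ a ∉ S, f a = a) (hg : ∀ a ∉ T, g a = a) : f * g = g * f := by
  have hd : f.Disjoint g := by
    intro a
    by_cases ha : a ∈ S
    · exact Or.inr (hg a (Finset.disjoint_left.mp hST ha))
    · exact Or.inl (hf a ha)
  exact hd.commute.eq

/-- Core pointwise lemma, `S`-side. -/
lemma core_S (S T : Finset α) (hST : Disjoint S T) (ρ' ρ'' τ' τ'' : Equiv.Perm α)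
    (hρ' : ∀ a ∉ S, ρ' a = a) (hρ'' : ∀ a ∉ T, ρ'' a = a)
    (h1 : RestrLE τ' ρ') (h2 : RestrLE τ'' ρ'') {a : α} (ha : a ∈ S) :
    (∀ b, (τ' * τ'').SameCycle a b → (ρ' * ρ'').SameCycle a b) ∧
    (∃ k : ℕ, 0 < k ∧ (τ' * τ'') a = ((ρ' * ρ'') ^ k) a ∧
      ∀ j : ℕ, 0 < j → j < k → ¬ (τ' * τ'').SameCycle a (((ρ' * ρ'') ^ j) a)) := by
  have hτ' : ∀ x ∉ S, τ' x = x := fun x hx => restr_fix h1 (hρ' x hx)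
  have hτ'' : ∀ x ∉ T, τ'' x = x := fun x hx => restr_fix h2 (hρ'' x hx)
  obtain ⟨hmemτ, happτ, hinvτ⟩ := prod_lemmas S T hST τ' τ'' hτ' hτ''
  obtain ⟨hmemρ, happρ, hinvρ⟩ := prod_lemmas S T hST ρ' ρ'' hρ' hρ''
  have SCτ : ∀ b, (τ' * τ'').SameCycle a b ↔ τ'.SameCycle a b :=
    sameCycle_iff_of_agree hmemτ happτ hinvτ ha
  have SCρ : ∀ b, (ρ' * ρ'').SameCycle a b ↔ ρ'.SameCycle a b :=
    sameCycle_iff_of_agree hmemρ happρ hinvρ ha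
  constructor
  · intro b hsc
    exact (SCρ b).mpr (h1.1 a b ((SCτ b).mp hsc))
  · obtain ⟨k, hk0, hka, hmin⟩ := h1.2 a
    refine ⟨k, hk0, ?_, ?_⟩
    · rw [happτ a ha, hka, (natAgree hmemρ happρ k a ha).1]
    · intro j hj0 hjk hsc
      have hj := natAgree hmemρ happρ j a ha
      rw [hj.1] at hsc
      exact hmin j hj0 hjk ((SCτ _).mp hsc)


/-- The product restriction. -/
lemma mul_le (S T : Finset α) (hST : Disjoint S T) (ρ' ρ'' τ' τ'' : Equiv.Perm α)
    (hρ' : ∀ a ∉ S, ρ' a = a) (hρ'' : ∀ a ∉ T, ρ'' a = a)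
    (h1 : RestrLE τ' ρ') (h2 : RestrLE τ'' ρ'') : RestrLE (τ' * τ'') (ρ' * ρ'') := by
  have hτ' : ∀ x ∉ S, τ' x = x := fun x hx => restr_fix h1 (hρ' x hx)
  have hτ'' : ∀ x ∉ T, τ'' x = x := fun x hx => restr_fix h2 (hρ'' x hx)
  have hcτ : τ' * τ'' = τ'' * τ' := commute_of_fix S T hST τ' τ'' hτ' hτ''
  have hcρ : ρ' * ρ'' = ρ'' * ρ' := commute_of_fix S T hST ρ' ρ'' hρ' hρ''
  constructor
  · intro a b hsc
    by_cases haS : a ∈ S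
    · exact (core_S S T hST ρ' ρ'' τ' τ'' hρ' hρ'' h1 h2 haS).1 b hsc
    by_cases haT : a ∈ T
    · rw [hcρ]
      rw [hcτ] at hsc
      exact (core_S T S hST.symm ρ'' ρ' τ'' τ' hρ'' hρ' h2 h1 haT).1 b hsc
    · have hfa : (τ' * τ'') a = a := by
        rw [Equiv.Perm.mul_apply, hτ'' a haT, hτ' a haS]
      rw [sameCycle_fix hfa hsc]
  · intro a
    by_cases haS : a ∈ S
    · exact (core_S S T hST ρ' ρ'' τ' τ'' hρ' hρ'' h1 h2 haS).2
    by_cases haT : a ∈ T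
    · rw [hcρ, hcτ]
      exact (core_S T S hST.symm ρ'' ρ' τ'' τ' hρ'' hρ' h2 h1 haT).2
    · have hρa : (ρ' * ρ'') a = a := by
        rw [Equiv.Perm.mul_apply, hρ'' a haT, hρ' a haS]
      have hfa : (τ' * τ'') a = a := by
        rw [Equiv.Perm.mul_apply, hτ'' a haT, hτ' a haS]
      exact ⟨1, one_pos, by rw [hfa, pow_one, hρa], fun j hj0 hj1 => absurd hj1 (by omega)⟩

/-- A permutation below a product preserves the `S` side. -/
lemma le_mem_iff (S T : Finset α) (hST : Disjoint S T) (ρ' ρ'' : Equiv.Perm α)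
    (hρ' : ∀ a ∉ S, ρ' a = a) (hρ'' : ∀ a ∉ T, ρ'' a = a)
    (τ : Equiv.Perm α) (h : RestrLE τ (ρ' * ρ'')) : ∀ a, a ∈ S ↔ τ a ∈ S := by
  obtain ⟨hmemρ, happρ, hinvρ⟩ := prod_lemmas S T hST ρ' ρ'' hρ' hρ''
  obtain ⟨hmemρ', happρ', hinvρ'⟩ := prod_lemmas T S hST.symm ρ'' ρ' hρ'' hρ'
  have hcρ : ρ' * ρ'' = ρ'' * ρ' := commute_of_fix S T hST ρ' ρ'' hρ' hρ''
  intro a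
  constructor
  · intro ha
    obtain ⟨k, _, hka, _⟩ := h.2 a
    rw [hka]
    exact (natAgree hmemρ happρ k a ha).2
  · intro ha
    by_contra haS
    by_cases haT : a ∈ T
    · obtain ⟨k, _, hka, _⟩ := h.2 a
      rw [hcρ] at hka
      have := (natAgree hmemρ' happρ' k a haT).2
      rw [← hka] at this
      exact Finset.disjoint_left.mp hST ha this
    · have hρa : (ρ' * ρ'') a = a := by
        rw [Equiv.Perm.mul_apply, hρ'' a haT, hρ' a haS]
      rw [restr_fix h hρa] at ha
      exact haS ha

/-- Masking a permutation to a set it preserves. -/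
def mask (τ : Equiv.Perm α) (S : Finset α) (h : ∀ a, a ∈ S ↔ τ a ∈ S) : Equiv.Perm α where
  toFun a := if a ∈ S then τ a else a
  invFun a := if a ∈ S then τ⁻¹ a else a
  left_inv a := by
    by_cases ha : a ∈ S
    · simp [ha, (h a).1 ha]
    · simp [ha]
  right_inv a := by
    by_cases ha : a ∈ S
    · have hi : τ⁻¹ a ∈ S := by
        have := h (τ⁻¹ a)
        rw [show τ (τ⁻¹ a) = a from τ.apply_symm_apply a] at this
        exact this.2 ha
      simp [ha, show τ.symm a ∈ S from hi]
    · simp [ha]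

lemma mask_apply (τ : Equiv.Perm α) (S : Finset α) (h : ∀ a, a ∈ S ↔ τ a ∈ S) (a : α) :
    mask τ S h a = if a ∈ S then τ a else a := rfl

lemma mask_inv_apply (τ : Equiv.Perm α) (S : Finset α) (h : ∀ a, a ∈ S ↔ τ a ∈ S) (a : α) :
    (mask τ S h)⁻¹ a = if a ∈ S then τ⁻¹ a else a := rfl

lemma mask_le (S T : Finset α) (hST : Disjoint S T) (ρ' ρ'' : Equiv.Perm α)
    (hρ' : ∀ a ∉ S, ρ' a = a) (hρ'' : ∀ a ∉ T, ρ'' a = a)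
    (τ : Equiv.Perm α) (h : RestrLE τ (ρ' * ρ''))
    (hmem : ∀ a, a ∈ S ↔ τ a ∈ S) : RestrLE (mask τ S hmem) ρ' := by
  obtain ⟨hmemρ, happρ, hinvρ⟩ := prod_lemmas S T hST ρ' ρ'' hρ' hρ''
  set m := mask τ S hmem with hm
  have hpm : ∀ a, a ∈ S ↔ m a ∈ S := by
    intro a
    by_cases ha : a ∈ S
    · rw [hm, mask_apply, if_pos ha]
      exact (iff_true_left ha).mpr ((hmem a).1 ha)
    · rw [hm, mask_apply, if_neg ha]
  have h1m : ∀ a, a ∈ S → m a = τ a := fun a ha => by rw [hm, mask_apply, if_pos ha]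
  have h2m : ∀ a, a ∈ S → m⁻¹ a = τ⁻¹ a := fun a ha => by
    rw [hm, mask_inv_apply, if_pos ha]
  constructor
  · intro a b hsc
    by_cases ha : a ∈ S
    · have hτsc : τ.SameCycle a b :=
        (sameCycle_iff_of_agree hpm h1m h2m ha b).mp hsc
      exact (sameCycle_iff_of_agree hmemρ happρ hinvρ ha b).mp (h.1 a b hτsc)
    · have hfa : m a = a := by rw [hm, mask_apply, if_neg ha]
      rw [sameCycle_fix hfa hsc]
  · intro a
    by_cases ha : a ∈ S
    · obtain ⟨k, hk0, hka, hmin⟩ := h.2 a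
      refine ⟨k, hk0, ?_, ?_⟩
      · rw [h1m a ha, hka, ← (natAgree hmemρ happρ k a ha).1]
      · intro j hj0 hjk hsc
        have hj := natAgree hmemρ happρ j a ha
        rw [← hj.1] at hsc
        have hτsc : τ.SameCycle a (((ρ' * ρ'') ^ j) a) :=
          (sameCycle_iff_of_agree hpm h1m h2m ha _).mp hsc
        exact hmin j hj0 hjk hτsc
    · have hfa : m a = a := by rw [hm, mask_apply, if_neg ha]
      exact ⟨1, one_pos, by rw [hfa, pow_one, hρ' a ha],
        fun j hj0 hj1 => absurd hj1 (by omega)⟩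

lemma mask_mul_S (S T : Finset α) (hST : Disjoint S T) (p1 p2 : Equiv.Perm α)
    (h1 : ∀ a ∉ S, p1 a = a) (h2 : ∀ a ∉ T, p2 a = a)
    (hmem : ∀ a, a ∈ S ↔ (p1 * p2) a ∈ S) : mask (p1 * p2) S hmem = p1 := by
  ext a
  rw [mask_apply]
  by_cases ha : a ∈ S
  · rw [if_pos ha, Equiv.Perm.mul_apply, h2 a (Finset.disjoint_left.mp hST ha)]
  · rw [if_neg ha, h1 a ha]

lemma mask_mul_mask (S T : Finset α) (hST : Disjoint S T) (τ : Equiv.Perm α)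
    (hS : ∀ a, a ∈ S ↔ τ a ∈ S) (hT : ∀ a, a ∈ T ↔ τ a ∈ T)
    (hfix : ∀ a, a ∉ S → a ∉ T → τ a = a) :
    mask τ S hS * mask τ T hT = τ := by
  ext a
  rw [Equiv.Perm.mul_apply, mask_apply, mask_apply]
  by_cases haT : a ∈ T
  · have haS : a ∉ S := fun h => Finset.disjoint_left.mp hST h haT
    rw [if_pos haT]
    have : τ a ∉ S := fun h =>
      Finset.disjoint_left.mp hST h ((hT a).1 haT)
    rw [if_neg this]
  · rw [if_neg haT]
    by_cases haS : a ∈ S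
    · rw [if_pos haS]
    · rw [if_neg haS, hfix a haS haT]


lemma mask_mul_T (S T : Finset α) (hST : Disjoint S T) (p1 p2 : Equiv.Perm α)
    (h1 : ∀ a ∉ S, p1 a = a) (h2 : ∀ a ∉ T, p2 a = a)
    (hmem : ∀ a, a ∈ T ↔ (p1 * p2) a ∈ T) : mask (p1 * p2) T hmem = p2 := by
  ext a
  rw [mask_apply]
  by_cases ha : a ∈ T
  · rw [if_pos ha, Equiv.Perm.mul_apply]
    have hp2a : p2 a ∈ T := (mem_iff_of_fix h2 a).1 ha
    rw [h1 _ (fun hs => Finset.disjoint_left.mp hST hs hp2a)]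
  · rw [if_neg ha, h2 a ha]

end RestrAux

theorem lowerIdeal_prod_orderIso (S T : Finset α) (hST : Disjoint S T)
    (σ' σ'' : Equiv.Perm α)
    (hσ' : ∀ a ∉ S, σ' a = a) (hσ'' : ∀ a ∉ T, σ'' a = a) :
    ∃ e : {τ : Equiv.Perm α // RestrLE τ σ'} × {τ : Equiv.Perm α // RestrLE τ σ''} ≃
          {τ : Equiv.Perm α // RestrLE τ (σ' * σ'')},
      (∀ p, ((e p : {τ : Equiv.Perm α // RestrLE τ (σ' * σ'')}) : Equiv.Perm α)
          = (p.1 : Equiv.Perm α) * (p.2 : Equiv.Perm α)) ∧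
      (∀ p q, (RestrLE (p.1 : Equiv.Perm α) (q.1 : Equiv.Perm α) ∧
               RestrLE (p.2 : Equiv.Perm α) (q.2 : Equiv.Perm α)) ↔
          RestrLE ((e p : {τ : Equiv.Perm α // RestrLE τ (σ' * σ'')}) : Equiv.Perm α)
                  ((e q : {τ : Equiv.Perm α // RestrLE τ (σ' * σ'')}) : Equiv.Perm α)) := by
  have hcσ : σ' * σ'' = σ'' * σ' := RestrAux.commute_of_fix S T hST σ' σ'' hσ' hσ''
  refine ⟨⟨fun p => ⟨(p.1 : Equiv.Perm α) * (p.2 : Equiv.Perm α),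
      RestrAux.mul_le S T hST σ' σ'' _ _ hσ' hσ'' p.1.2 p.2.2⟩,
      fun τ => (⟨RestrAux.mask τ.1 S (RestrAux.le_mem_iff S T hST σ' σ'' hσ' hσ'' τ.1 τ.2),
          RestrAux.mask_le S T hST σ' σ'' hσ' hσ'' τ.1 τ.2 _⟩,
        ⟨RestrAux.mask τ.1 T
            (RestrAux.le_mem_iff T S hST.symm σ'' σ' hσ'' hσ' τ.1 (hcσ ▸ τ.2)),
          RestrAux.mask_le T S hST.symm σ'' σ' hσ'' hσ' τ.1 (hcσ ▸ τ.2) _⟩),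
      ?_, ?_⟩, fun p => rfl, ?_⟩
  · intro p
    obtain ⟨⟨p1, hp1⟩, ⟨p2, hp2⟩⟩ := p
    have h1 : ∀ a ∉ S, p1 a = a := fun a ha => RestrAux.restr_fix hp1 (hσ' a ha)
    have h2 : ∀ a ∉ T, p2 a = a := fun a ha => RestrAux.restr_fix hp2 (hσ'' a ha)
    refine Prod.ext (Subtype.ext ?_) (Subtype.ext ?_)
    · apply RestrAux.mask_mul_S S T hST p1 p2 h1 h2
      exact (RestrAux.prod_lemmas S T hST p1 p2 h1 h2).1
    · apply RestrAux.mask_mul_T S T hST p1 p2 h1 h2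
      have hc : p1 * p2 = p2 * p1 := RestrAux.commute_of_fix S T hST p1 p2 h1 h2
      rw [hc]
      exact (RestrAux.prod_lemmas T S hST.symm p2 p1 h2 h1).1
  · intro τ
    apply Subtype.ext
    refine RestrAux.mask_mul_mask S T hST τ.1
      (RestrAux.le_mem_iff S T hST σ' σ'' hσ' hσ'' τ.1 τ.2)
      (RestrAux.le_mem_iff T S hST.symm σ'' σ' hσ'' hσ' τ.1 (hcσ ▸ τ.2)) ?_
    intro a haS haT
    apply RestrAux.restr_fix τ.2
    rw [Equiv.Perm.mul_apply, hσ'' a haT, hσ' a haS]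
  · intro p q
    constructor
    · rintro ⟨h1, h2⟩
      exact RestrAux.mul_le S T hST (q.1 : Equiv.Perm α) (q.2 : Equiv.Perm α) _ _
        (fun a ha => RestrAux.restr_fix q.1.2 (hσ' a ha))
        (fun a ha => RestrAux.restr_fix q.2.2 (hσ'' a ha)) h1 h2
    · intro hle
      have hq1 : ∀ a ∉ S, (q.1 : Equiv.Perm α) a = a :=
        fun a ha => RestrAux.restr_fix q.1.2 (hσ' a ha)
      have hq2 : ∀ a ∉ T, (q.2 : Equiv.Perm α) a = a :=
        fun a ha => RestrAux.restr_fix q.2.2 (hσ'' a ha)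
      have hp1 : ∀ a ∉ S, (p.1 : Equiv.Perm α) a = a :=
        fun a ha => RestrAux.restr_fix p.1.2 (hσ' a ha)
      have hp2 : ∀ a ∉ T, (p.2 : Equiv.Perm α) a = a :=
        fun a ha => RestrAux.restr_fix p.2.2 (hσ'' a ha)
      have hle' : RestrLE ((p.1 : Equiv.Perm α) * (p.2 : Equiv.Perm α))
          ((q.1 : Equiv.Perm α) * (q.2 : Equiv.Perm α)) := hle
      have hcq : (q.1 : Equiv.Perm α) * (q.2 : Equiv.Perm α)
          = (q.2 : Equiv.Perm α) * (q.1 : Equiv.Perm α) :=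
        RestrAux.commute_of_fix S T hST _ _ hq1 hq2
      have hcp : (p.1 : Equiv.Perm α) * (p.2 : Equiv.Perm α)
          = (p.2 : Equiv.Perm α) * (p.1 : Equiv.Perm α) :=
        RestrAux.commute_of_fix S T hST _ _ hp1 hp2
      constructor
      · have hmemS := RestrAux.le_mem_iff S T hST _ _ hq1 hq2 _ hle'
        have := RestrAux.mask_le S T hST _ _ hq1 hq2 _ hle' hmemS
        rwa [RestrAux.mask_mul_S S T hST _ _ hp1 hp2 hmemS] at this
      · have hle'' : RestrLE ((p.1 : Equiv.Perm α) * (p.2 : Equiv.Perm α))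
            ((q.2 : Equiv.Perm α) * (q.1 : Equiv.Perm α)) := hcq ▸ hle'
        have hmemT := RestrAux.le_mem_iff T S hST.symm _ _ hq2 hq1 _ hle''
        have := RestrAux.mask_le T S hST.symm _ _ hq2 hq1 _ hle'' hmemT
        rwa [RestrAux.mask_mul_T S T hST _ _ hp1 hp2 hmemT] at this
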